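/- Let F be continuous on [a,b] and differentiable on (a,b), with least concave majorant F̂ and Z_F = {x ∈ [a,b] : F̂(x) = F(x)}. Then F̂ is differentiable on (a,b); moreover (F̂)'(x) = F'(x) for every x ∈ (a,b) ∩ Z_F, and for every connected component of [a,b] \ Z_F with closure endpoints α < β, (F̂)'(x) = (F(β)−F(α))/(β−α) for every x ∈ [α,β] ∩ (a,b). In particular F'(x) = (F̂)'(x) = (F(β)−F(α))/(β−α) whenever x = α ∈ (a,b) or x = β ∈ (a,b). -/

import Mathlib

open Set Filter Topology Asymptotics

/-- The least concave majorant of `F` on `[a, b]`. -/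
noncomputable def leastConcaveMajorant (a b : ℝ) (F : ℝ → ℝ) (x : ℝ) : ℝ :=
  sInf {y : ℝ | ∃ G : ℝ → ℝ, ConcaveOn ℝ (Set.Icc a b) G ∧
    (∀ z ∈ Set.Icc a b, F z ≤ G z) ∧ y = G x}

open Set

section Aux
variable {a b : ℝ} {F : ℝ → ℝ}

private def mset (a b : ℝ) (F : ℝ → ℝ) (x : ℝ) : Set ℝ :=
  {y : ℝ | ∃ G : ℝ → ℝ, ConcaveOn ℝ (Set.Icc a b) G ∧
    (∀ z ∈ Set.Icc a b, F z ≤ G z) ∧ y = G x}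

private lemma lcm_eq (x : ℝ) : leastConcaveMajorant a b F x = sInf (mset a b F x) := rfl

private lemma mset_nonempty (hF : ContinuousOn F (Icc a b)) (x : ℝ) :
    (mset a b F x).Nonempty := by
  obtain ⟨C, hC⟩ := isCompact_Icc.exists_bound_of_continuousOn hF
  exact ⟨C, fun _ => C, concaveOn_const _ (convex_Icc a b),
    fun z hz => (le_abs_self _).trans (by simpa [Real.norm_eq_abs] using hC z hz), rfl⟩

private lemma mset_bddBelow {x : ℝ} (hx : x ∈ Icc a b) : BddBelow (mset a b F x) :=
  ⟨F x, fun y ⟨G, _, hm, hy⟩ => hy ▸ hm x hx⟩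

private lemma lcm_le {x : ℝ} (hx : x ∈ Icc a b) {G : ℝ → ℝ}
    (hG : ConcaveOn ℝ (Icc a b) G) (hm : ∀ z ∈ Icc a b, F z ≤ G z) :
    leastConcaveMajorant a b F x ≤ G x :=
  csInf_le (mset_bddBelow hx) ⟨G, hG, hm, rfl⟩

private lemma le_lcm (hF : ContinuousOn F (Icc a b)) {x : ℝ} (hx : x ∈ Icc a b) :
    F x ≤ leastConcaveMajorant a b F x :=
  le_csInf (mset_nonempty hF x) (fun y ⟨_, _, hm, hy⟩ => hy ▸ hm x hx)

private lemma lcm_concave (hF : ContinuousOn F (Icc a b)) :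
    ConcaveOn ℝ (Icc a b) (leastConcaveMajorant a b F) := by
  refine ⟨convex_Icc a b, fun x hx y hy t s ht hs hts => ?_⟩
  refine le_csInf (mset_nonempty hF _) ?_
  rintro z ⟨G, hG, hm, rfl⟩
  calc t • leastConcaveMajorant a b F x + s • leastConcaveMajorant a b F y
      ≤ t • G x + s • G y := by
        simp only [smul_eq_mul]
        gcongr
        · exact lcm_le hx hG hm
        · exact lcm_le hy hG hm
    _ ≤ G (t • x + s • y) := hG.2 hx hy ht hs hts

private lemma chord_le_lcm (hF : ContinuousOn F (Icc a b)) {u v y : ℝ}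
    (hu : u ∈ Icc a b) (hv : v ∈ Icc a b) (huy : u ≤ y) (hyv : y ≤ v) (huv : u < v) :
    ((v - y) * F u + (y - u) * F v) / (v - u) ≤ leastConcaveMajorant a b F y := by
  refine le_csInf (mset_nonempty hF y) ?_
  rintro z ⟨G, hG, hm, rfl⟩
  have hne : v - u ≠ 0 := by linarith
  have h1 : (0:ℝ) ≤ (v - y) / (v - u) := div_nonneg (by linarith) (by linarith)
  have h2 : (0:ℝ) ≤ (y - u) / (v - u) := div_nonneg (by linarith) (by linarith)
  have h3 : (v - y) / (v - u) + (y - u) / (v - u) = 1 := by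
    rw [← add_div]; rw [show v - y + (y - u) = v - u by ring, div_self hne]
  have h4 := hG.2 hu hv h1 h2 h3
  have h5 : ((v - y) / (v - u)) • u + ((y - u) / (v - u)) • v = y := by
    simp only [smul_eq_mul]; field_simp [hne]; ring
  rw [h5] at h4
  calc ((v - y) * F u + (y - u) * F v) / (v - u)
      = ((v - y) / (v - u)) • F u + ((y - u) / (v - u)) • F v := by
        simp only [smul_eq_mul]; field_simp [hne]
    _ ≤ ((v - y) / (v - u)) • G u + ((y - u) / (v - u)) • G v := by
        simp only [smul_eq_mul]; gcongr <;> [exact hm u hu; exact hm v hv]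
    _ ≤ G y := h4

private lemma sep {φ : ℝ → ℝ} {x c : ℝ} (hx : x ∈ Icc a b) (hc : φ x ≤ c)
    (hcross : ∀ u ∈ Icc a b, ∀ v ∈ Icc a b, u < x → x < v →
      (φ v - c) / (v - x) ≤ (c - φ u) / (x - u))
    (hA : BddAbove {r | ∃ v ∈ Icc a b, x < v ∧ r = (φ v - c) / (v - x)})
    (hB : BddBelow {r | ∃ u ∈ Icc a b, u < x ∧ r = (c - φ u) / (x - u)}) :
    ∃ s : ℝ, ∀ y ∈ Icc a b, φ y ≤ c + s * (y - x) := by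
  set R := {r | ∃ v ∈ Icc a b, x < v ∧ r = (φ v - c) / (v - x)} with hR
  set L := {r | ∃ u ∈ Icc a b, u < x ∧ r = (c - φ u) / (x - u)} with hL
  by_cases hRne : R.Nonempty
  · refine ⟨sSup R, fun y hy => ?_⟩
    rcases lt_trichotomy y x with h | h | h
    · have hyL : (c - φ y) / (x - y) ∈ L := ⟨y, hy, h, rfl⟩
      have h1 : sSup R ≤ (c - φ y) / (x - y) := by
        refine csSup_le hRne ?_
        rintro r ⟨v, hv, hxv, rfl⟩
        exact hcross y hy v hv h hxv
      have h2 : sSup R * (x - y) ≤ c - φ y := (le_div_iff₀ (by linarith : (0:ℝ) < x - y)).1 h1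
      nlinarith
    · subst h; simpa using hc
    · have h1 : (φ y - c) / (y - x) ≤ sSup R := le_csSup hA ⟨y, hy, h, rfl⟩
      have h2 : φ y - c ≤ sSup R * (y - x) := by
        rw [div_le_iff₀ (by linarith)] at h1; linarith
      linarith
  · by_cases hLne : L.Nonempty
    · refine ⟨sInf L, fun y hy => ?_⟩
      rcases lt_trichotomy y x with h | h | h
      · have h1 : sInf L ≤ (c - φ y) / (x - y) := csInf_le hB ⟨y, hy, h, rfl⟩
        have h2 : sInf L * (x - y) ≤ c - φ y := (le_div_iff₀ (by linarith : (0:ℝ) < x - y)).1 h1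
        nlinarith
      · subst h; simpa using hc
      · exact absurd ⟨_, ⟨y, hy, h, rfl⟩⟩ hRne
    · refine ⟨0, fun y hy => ?_⟩
      rcases lt_trichotomy y x with h | h | h
      · exact absurd ⟨_, ⟨y, hy, h, rfl⟩⟩ hLne
      · subst h; simpa using hc
      · exact absurd ⟨_, ⟨y, hy, h, rfl⟩⟩ hRne

private lemma affine_concave (a b : ℝ) (p s x0 : ℝ) :
    ConcaveOn ℝ (Icc a b) (fun y => p + s * (y - x0)) := by
  refine ⟨convex_Icc a b, fun y _ z _ t r ht hr htr => le_of_eq ?_⟩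
  simp only [smul_eq_mul]
  linear_combination (p - s * x0) * htr

private lemma lcm_le_of_chords (hF : ContinuousOn F (Icc a b)) {x c : ℝ}
    (hx : x ∈ Icc a b) (hc : F x ≤ c)
    (hch : ∀ u ∈ Icc a b, ∀ v ∈ Icc a b, u < x → x < v →
      (v - x) * F u + (x - u) * F v ≤ c * (v - u)) :
    leastConcaveMajorant a b F x ≤ c := by
  refine le_of_forall_pos_le_add (fun ε hε => ?_)
  set c' := c + ε with hc'
  have hxc' : F x < c' := by linarith
  obtain ⟨M, hM⟩ := isCompact_Icc.exists_bound_of_continuousOn hF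
  have hM' : ∀ y ∈ Icc a b, F y ≤ M := fun y hy =>
    (le_abs_self _).trans (by simpa [Real.norm_eq_abs] using hM y hy)
  obtain ⟨δ, hδpos, hδ⟩ : ∃ δ > 0, ∀ y, dist y x < δ → (y ∈ Icc a b → F y < c') := by
    have hcont : ContinuousWithinAt F (Icc a b) x := hF x hx
    have hev : ∀ᶠ y in 𝓝[Icc a b] x, F y < c' := hcont.eventually_lt_const hxc'
    rw [eventually_nhdsWithin_iff, Metric.eventually_nhds_iff] at hev
    obtain ⟨δ, hδpos, hδ⟩ := hev
    exact ⟨δ, hδpos, fun y hy hmem => hδ hy hmem⟩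
  have hcross : ∀ u ∈ Icc a b, ∀ v ∈ Icc a b, u < x → x < v →
      (F v - c') / (v - x) ≤ (c' - F u) / (x - u) := by
    intro u hu v hv hux hxv
    rw [div_le_div_iff₀ (by linarith) (by linarith)]
    have := hch u hu v hv hux hxv
    nlinarith
  have key : ∀ w ∈ Icc a b, x < w → ¬ (F w ≤ c') → δ ≤ w - x ∧ F w - c' ≤ M - c' ∧ (0:ℝ) ≤ M - c' := by
    intro w hw hxw hFw
    push_neg at hFw
    refine ⟨?_, by linarith [hM' w hw], by linarith [hM' w hw]⟩
    by_contra h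
    push_neg at h
    have := hδ w (by rw [Real.dist_eq, abs_of_pos (by linarith : (0:ℝ) < w - x)]; linarith) hw
    linarith
  have key' : ∀ w ∈ Icc a b, w < x → ¬ (F w ≤ c') → δ ≤ x - w ∧ F w - c' ≤ M - c' ∧ (0:ℝ) ≤ M - c' := by
    intro w hw hxw hFw
    push_neg at hFw
    refine ⟨?_, by linarith [hM' w hw], by linarith [hM' w hw]⟩
    by_contra h
    push_neg at h
    have := hδ w (by rw [Real.dist_eq, abs_of_neg (by linarith : w - x < 0)]; linarith) hw
    linarith
  have hbA : BddAbove {r | ∃ v ∈ Icc a b, x < v ∧ r = (F v - c') / (v - x)} := by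
    refine ⟨max 0 ((M - c') / δ), ?_⟩
    rintro r ⟨v, hv, hxv, rfl⟩
    by_cases hFv : F v ≤ c'
    · exact le_trans (div_nonpos_of_nonpos_of_nonneg (by linarith) (by linarith)) (le_max_left _ _)
    · obtain ⟨h1, h2, h3⟩ := key v hv hxv hFv
      exact le_trans (div_le_div₀ h3 h2 hδpos h1) (le_max_right _ _)
  have hbB : BddBelow {r | ∃ u ∈ Icc a b, u < x ∧ r = (c' - F u) / (x - u)} := by
    refine ⟨min 0 (-((M - c') / δ)), ?_⟩
    rintro r ⟨u, hu, hux, rfl⟩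
    by_cases hFu : F u ≤ c'
    · exact le_trans (min_le_left _ _) (div_nonneg (by linarith) (by linarith))
    · obtain ⟨h1, h2, h3⟩ := key' u hu hux hFu
      refine le_trans (min_le_right _ _) ?_
      have h4 : (F u - c') / (x - u) ≤ (M - c') / δ := div_le_div₀ h3 h2 hδpos h1
      have h5 : (c' - F u) / (x - u) = -((F u - c') / (x - u)) := by ring
      rw [h5]
      linarith
  obtain ⟨s, hs⟩ := sep hx (le_of_lt hxc') hcross hbA hbB
  have := lcm_le hx (affine_concave a b c' s x) hs
  simpa using this

private lemma lcm_left_endpoint (hab : a < b) (hF : ContinuousOn F (Icc a b)) :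
    leastConcaveMajorant a b F a = F a := by
  refine le_antisymm ?_ (le_lcm hF (left_mem_Icc.2 hab.le))
  refine lcm_le_of_chords hF (left_mem_Icc.2 hab.le) le_rfl ?_
  intro u hu v _ hua _
  exact absurd (lt_of_le_of_lt hu.1 hua) (lt_irrefl a)

private lemma lcm_right_endpoint (hab : a < b) (hF : ContinuousOn F (Icc a b)) :
    leastConcaveMajorant a b F b = F b := by
  refine le_antisymm ?_ (le_lcm hF (right_mem_Icc.2 hab.le))
  refine lcm_le_of_chords hF (right_mem_Icc.2 hab.le) le_rfl ?_
  intro u _ v hv _ hbv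
  exact absurd (lt_of_lt_of_le hbv hv.2) (lt_irrefl b)

private lemma lcm_affine_of_gt (hF : ContinuousOn F (Icc a b)) {x : ℝ}
    (hx : x ∈ Ioo a b) (hgt : F x < leastConcaveMajorant a b F x) :
    ∃ u v : ℝ, u ∈ Icc a b ∧ v ∈ Icc a b ∧ u < x ∧ x < v ∧
      leastConcaveMajorant a b F u = F u ∧ leastConcaveMajorant a b F v = F v ∧
      ∀ y ∈ Icc u v, leastConcaveMajorant a b F y
        = F u + (F v - F u) / (v - u) * (y - u) := by
  set L := leastConcaveMajorant a b F with hL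
  have hxI : x ∈ Icc a b := Ioo_subset_Icc_self hx
  set T := F x + (L x - F x) / 2 with hT
  have hTlt : T < L x := by rw [hT]; linarith
  have hTge : F x ≤ T := by rw [hT]; linarith
  -- find η
  obtain ⟨δ, hδpos, hδ⟩ : ∃ δ > 0, ∀ y, dist y x < δ → (y ∈ Icc a b → F y ≤ T) := by
    have hcont : ContinuousWithinAt F (Icc a b) x := hF x hxI
    have hev : ∀ᶠ y in 𝓝[Icc a b] x, F y < T := by
      refine hcont.eventually_lt_const (by rw [hT]; linarith)
    rw [eventually_nhdsWithin_iff, Metric.eventually_nhds_iff] at hev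
    obtain ⟨δ, hδpos, hδ⟩ := hev
    exact ⟨δ, hδpos, fun y hy hmem => (hδ hy hmem).le⟩
  set η := min (δ / 2) (min (x - a) (b - x)) with hη
  have hηpos : 0 < η := by
    rw [hη]
    exact lt_min (by linarith) (lt_min (by linarith [hx.1]) (by linarith [hx.2]))
  have hηδ : η < δ := by
    rw [hη]
    exact lt_of_le_of_lt (min_le_left _ _) (by linarith)
  have hηa : a ≤ x - η := by
    have := min_le_left (x - a) (b - x)
    have := min_le_right (δ / 2) (min (x - a) (b - x))
    rw [hη]; simp only [ge_iff_le]
    have h1 : η ≤ x - a := le_trans (min_le_right _ _) (min_le_left _ _)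
    linarith
  have hηb : x + η ≤ b := by
    have h1 : η ≤ b - x := le_trans (min_le_right _ _) (min_le_right _ _)
    linarith
  have hηF : ∀ y ∈ Icc a b, |y - x| ≤ η → F y ≤ T := by
    intro y hy hyx
    exact hδ y (by rw [Real.dist_eq]; linarith) hy
  -- the compact set of admissible chords
  set K : Set (ℝ × ℝ) := (Icc a x ×ˢ Icc x b) ∩ {p : ℝ × ℝ | p.1 ≤ x - η ∨ x + η ≤ p.2}
    with hK
  have hKc : IsCompact K := by
    apply (isCompact_Icc.prod isCompact_Icc).inter_right
    exact (isClosed_le continuous_fst continuous_const).union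
      (isClosed_le continuous_const continuous_snd)
  have hKne : ((a, b) : ℝ × ℝ) ∈ K := by
    refine ⟨⟨⟨le_rfl, hx.1.le⟩, ⟨hx.2.le, le_rfl⟩⟩, Or.inl hηa⟩
  have hgap : ∀ p ∈ K, η ≤ p.2 - p.1 := by
    rintro p ⟨⟨h1, h2⟩, h3 | h3⟩
    · have : x ≤ p.2 := h2.1
      have : p.1 ≤ x - η := h3
      linarith
    · have : p.1 ≤ x := h1.2
      linarith
  set ψ : ℝ × ℝ → ℝ := fun p => ((p.2 - x) * F p.1 + (x - p.1) * F p.2) / (p.2 - p.1)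
    with hψ
  have hKsub1 : ∀ p ∈ K, p.1 ∈ Icc a b := by
    rintro p ⟨⟨h1, _⟩, _⟩
    exact ⟨h1.1, le_trans h1.2 hx.2.le⟩
  have hKsub2 : ∀ p ∈ K, p.2 ∈ Icc a b := by
    rintro p ⟨⟨_, h2⟩, _⟩
    exact ⟨le_trans hx.1.le h2.1, h2.2⟩
  have hψc : ContinuousOn ψ K := by
    apply ContinuousOn.div
    · apply ContinuousOn.add
      · exact ((continuous_snd.sub continuous_const).continuousOn).mul
          (hF.comp continuous_fst.continuousOn hKsub1)
      · exact ((continuous_const.sub continuous_fst).continuousOn).mul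
          (hF.comp continuous_snd.continuousOn hKsub2)
    · exact (continuous_snd.sub continuous_fst).continuousOn
    · intro p hp
      have := hgap p hp
      intro h0
      rw [h0] at this
      linarith
  obtain ⟨p, hpK, hpmax⟩ := hKc.exists_isMaxOn ⟨(a, b), hKne⟩ hψc
  set u := p.1 with hu'
  set v := p.2 with hv'
  have hpuv : (u, v) = p := rfl
  have huI : u ∈ Icc a b := hKsub1 p hpK
  have hvI : v ∈ Icc a b := hKsub2 p hpK
  have hux : u ≤ x := hpK.1.1.2
  have hxv : x ≤ v := hpK.1.2.1
  have huv : η ≤ v - u := hgap p hpK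
  have huv' : u < v := by linarith
  have hne : v - u ≠ 0 := by linarith
  -- ψ p ≤ L x
  have hc1 : ψ p ≤ L x := chord_le_lcm hF huI hvI hux hxv huv'
  -- L x ≤ max (ψ p) T
  have hc2 : L x ≤ max (ψ p) T := by
    refine lcm_le_of_chords hF hxI (le_trans hTge (le_max_right _ _)) ?_
    intro u' hu' v' hv' hu'x hxv'
    by_cases hcase : ((u', v') : ℝ × ℝ) ∈ K
    · have h1 : ψ (u', v') ≤ ψ p := hpmax hcase
      have h2 : ψ (u', v') = ((v' - x) * F u' + (x - u') * F v') / (v' - u') := rfl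
      have h3 : ((v' - x) * F u' + (x - u') * F v') / (v' - u') ≤ max (ψ p) T :=
        le_trans (h2 ▸ h1) (le_max_left _ _)
      rw [div_le_iff₀ (by linarith : (0:ℝ) < v' - u')] at h3
      linarith
    · have hnotin : ¬(u' ≤ x - η ∨ x + η ≤ v') := by
        intro h
        exact hcase ⟨⟨⟨hu'.1, hu'x.le⟩, ⟨hxv'.le, hv'.2⟩⟩, h⟩
      push_neg at hnotin
      obtain ⟨h1, h2⟩ := hnotin
      have hFu' : F u' ≤ T := hηF u' hu' (by rw [abs_of_neg (by linarith : u' - x < 0)]; linarith)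
      have hFv' : F v' ≤ T := hηF v' hv' (by rw [abs_of_pos (by linarith : (0:ℝ) < v' - x)]; linarith)
      have hmax : T ≤ max (ψ p) T := le_max_right _ _
      nlinarith
  have heq : ψ p = L x := by
    rcases max_cases (ψ p) T with ⟨h1, _⟩ | ⟨h1, _⟩
    · rw [h1] at hc2; exact le_antisymm hc1 hc2
    · rw [h1] at hc2; linarith
  -- u < x < v
  have hux' : u < x := by
    rcases lt_or_eq_of_le hux with h | h
    · exact h
    · exfalso
      have : ψ p = F x := by
        rw [hψ]
        simp only [← hpuv]
        rw [← h]
        have : v - u ≠ 0 := hne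
        field_simp
        ring
      rw [heq] at this
      linarith
  have hxv' : x < v := by
    rcases lt_or_eq_of_le hxv with h | h
    · exact h
    · exfalso
      have : ψ p = F x := by
        rw [hψ]
        simp only [← hpuv]
        rw [h]
        field_simp
        ring
      rw [heq] at this
      linarith
  -- the affine function
  set s := (F v - F u) / (v - u) with hs
  set A : ℝ → ℝ := fun y => F u + s * (y - u) with hA
  have hchordA : ∀ y : ℝ, A y = ((v - y) * F u + (y - u) * F v) / (v - u) := by
    intro y
    rw [hA, hs]
    field_simp
    ring
  have hAx : A x = L x := by
    rw [hchordA, ← heq, hψ]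
  have hAu : A u = F u := by rw [hA]; simp
  have hAv : A v = F v := by
    rw [hchordA]
    field_simp
    ring
  have hgeA : ∀ y ∈ Icc u v, A y ≤ L y := by
    intro y hy
    rw [hchordA]
    exact chord_le_lcm hF huI hvI hy.1 hy.2 huv'
  have hconc := lcm_concave hF
  have hleA : ∀ y ∈ Icc u v, L y ≤ A y := by
    intro y hy
    by_contra hcon
    push_neg at hcon
    have hyI : y ∈ Icc a b := ⟨le_trans huI.1 hy.1, le_trans hy.2 hvI.2⟩
    rcases lt_trichotomy y x with h | h | h
    · -- use points y < x < v
      have hvy : (0:ℝ) < v - y := by linarith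
      set t := (v - x) / (v - y) with ht
      set r := (x - y) / (v - y) with hr
      have ht0 : 0 < t := div_pos (by linarith) hvy
      have hr0 : 0 ≤ r := div_nonneg (by linarith) hvy.le
      have htr : t + r = 1 := by rw [ht, hr]; field_simp; ring
      have hcomb : t • y + r • v = x := by
        simp only [smul_eq_mul, ht, hr]; field_simp; ring
      have h4 := hconc.2 hyI hvI ht0.le hr0 htr
      rw [hcomb] at h4
      simp only [smul_eq_mul] at h4
      have h5 : t * A y < t * L y := by
        apply mul_lt_mul_of_pos_left hcon ht0
      have h6 : r * A v ≤ r * L v := by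
        apply mul_le_mul_of_nonneg_left _ hr0
        rw [hAv]
        exact le_lcm hF hvI
      have h7 : t * A y + r * A v = A x := by
        rw [hA]
        simp only
        rw [ht, hr, hs]
        field_simp
        ring
      rw [hAx] at h7
      linarith
    · rw [h] at hcon
      rw [hAx] at hcon
      linarith
    · -- use points u < x < y
      have hyu : (0:ℝ) < y - u := by linarith
      set t := (y - x) / (y - u) with ht
      set r := (x - u) / (y - u) with hr
      have ht0 : 0 ≤ t := div_nonneg (by linarith) hyu.le
      have hr0 : 0 < r := div_pos (by linarith) hyu
      have htr : t + r = 1 := by rw [ht, hr]; field_simp; ring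
      have hcomb : t • u + r • y = x := by
        simp only [smul_eq_mul, ht, hr]; field_simp; ring
      have h4 := hconc.2 huI hyI ht0 hr0.le htr
      rw [hcomb] at h4
      simp only [smul_eq_mul] at h4
      have h5 : r * A y < r * L y := mul_lt_mul_of_pos_left hcon hr0
      have h6 : t * A u ≤ t * L u := by
        apply mul_le_mul_of_nonneg_left _ ht0
        rw [hAu]
        exact le_lcm hF huI
      have h7 : t * A u + r * A y = A x := by
        rw [hA]
        simp only
        rw [ht, hr, hs]
        field_simp
        ring
      rw [hAx] at h7
      linarith
  have hLu : L u = F u := by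
    have h1 := hleA u ⟨le_rfl, huv'.le⟩
    have h2 := le_lcm hF huI
    rw [hAu] at h1
    exact le_antisymm h1 h2
  have hLv : L v = F v := by
    have h1 := hleA v ⟨huv'.le, le_rfl⟩
    have h2 := le_lcm hF hvI
    rw [hAv] at h1
    exact le_antisymm h1 h2
  exact ⟨u, v, huI, hvI, hux', hxv', hLu, hLv, fun y hy =>
    le_antisymm (hleA y hy) (hgeA y hy)⟩

private lemma lcm_hasDeriv_of_eq (hab : a < b) (hF : ContinuousOn F (Icc a b)) {x : ℝ}
    (hx : x ∈ Ioo a b) (hFd : DifferentiableAt ℝ F x)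
    (heq : leastConcaveMajorant a b F x = F x) :
    HasDerivAt (leastConcaveMajorant a b F) (deriv F x) x := by
  set L := leastConcaveMajorant a b F with hL
  have hxI : x ∈ Icc a b := Ioo_subset_Icc_self hx
  have hconc := lcm_concave hF
  have hcross : ∀ u ∈ Icc a b, ∀ v ∈ Icc a b, u < x → x < v →
      (L v - L x) / (v - x) ≤ (L x - L u) / (x - u) := by
    intro u hu v hv hux hxv
    exact hconc.slope_anti_adjacent hu hv hux hxv
  have hbA : BddAbove {r | ∃ v ∈ Icc a b, x < v ∧ r = (L v - L x) / (v - x)} := by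
    refine ⟨(L x - L a) / (x - a), ?_⟩
    rintro r ⟨v, hv, hxv, rfl⟩
    exact hconc.slope_anti_adjacent (left_mem_Icc.2 hab.le) hv hx.1 hxv
  have hbB : BddBelow {r | ∃ u ∈ Icc a b, u < x ∧ r = (L x - L u) / (x - u)} := by
    refine ⟨(L b - L x) / (b - x), ?_⟩
    rintro r ⟨u, hu, hux, rfl⟩
    exact hconc.slope_anti_adjacent hu (right_mem_Icc.2 hab.le) hux hx.2
  obtain ⟨s, hs⟩ := sep hxI le_rfl hcross hbA hbB
  have hFloc : ∀ᶠ y in 𝓝 x, F y ≤ L y := by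
    filter_upwards [Ioo_mem_nhds hx.1 hx.2] with y hy
    exact le_lcm hF (Ioo_subset_Icc_self hy)
  have hsloc : ∀ᶠ y in 𝓝 x, L y ≤ F x + s * (y - x) := by
    filter_upwards [Icc_mem_nhds hx.1 hx.2] with y hy
    rw [← heq]
    exact hs y hy
  have hlin : HasDerivAt (fun y => F x + s * (y - x) - F y) (s - deriv F x) x := by
    have h1 : HasDerivAt (fun y : ℝ => F x + s * (y - x)) s x := by
      have h2 : HasDerivAt (fun y : ℝ => y - x) 1 x := (hasDerivAt_id x).sub_const x
      have h3 := (h2.const_mul s).const_add (F x)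
      simpa using h3
    exact h1.sub hFd.hasDerivAt
  have hmin : IsLocalMin (fun y => F x + s * (y - x) - F y) x := by
    filter_upwards [hFloc, hsloc] with y h1 h2
    have : F y ≤ F x + s * (y - x) := le_trans h1 h2
    simpa using this
  have hsd : s - deriv F x = 0 := hmin.hasDerivAt_eq_zero hlin
  have hsd' : s = deriv F x := by linarith
  rw [hasDerivAt_iff_isLittleO]
  have hFo : (fun y => F y - F x - (y - x) • deriv F x) =o[𝓝 x] (fun y => y - x) :=
    hasDerivAt_iff_isLittleO.1 hFd.hasDerivAt
  have hbig : (fun y => L y - L x - (y - x) • deriv F x)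
      =O[𝓝 x] (fun y => F y - F x - (y - x) • deriv F x) := by
    rw [Asymptotics.isBigO_iff]
    refine ⟨1, ?_⟩
    filter_upwards [hFloc, hsloc] with y h1 h2
    have hLx : L x = F x := heq
    have e1 : F y - F x - (y - x) * deriv F x ≤ L y - L x - (y - x) * deriv F x := by
      rw [hLx]; linarith
    have e2 : L y - L x - (y - x) * deriv F x ≤ 0 := by
      rw [hLx, ← hsd']; linarith
    simp only [smul_eq_mul, Real.norm_eq_abs, one_mul]
    rw [abs_le]
    constructor
    · have := neg_abs_le (F y - F x - (y - x) * deriv F x)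
      linarith
    · have := le_abs_self (F y - F x - (y - x) * deriv F x)
      have h3 : L y - L x - (y - x) * deriv F x ≤ -(F y - F x - (y - x) * deriv F x) := by
        linarith
      have h4 := neg_abs_le (F y - F x - (y - x) * deriv F x)
      calc L y - L x - (y - x) * deriv F x ≤ 0 := e2
        _ ≤ |F y - F x - (y - x) * deriv F x| := abs_nonneg _
  exact hbig.trans_isLittleO hFo

private lemma deriv_eq_of_right_affine {g : ℝ → ℝ} {x d s e : ℝ} (hg : HasDerivAt g d x)
    (hxe : x < e) (haff : ∀ y, x < y → y < e → g y = g x + s * (y - x)) : d = s := by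
  have h1 : HasDerivWithinAt g d (Ioi x) x := hg.hasDerivWithinAt
  rw [hasDerivWithinAt_iff_tendsto_slope] at h1
  have hss : Ioi x \ {x} = Ioi x := by
    apply diff_singleton_eq_self
    simp
  rw [hss] at h1
  have h2 : ∀ᶠ y in 𝓝[>] x, slope g x y = s := by
    filter_upwards [Ioo_mem_nhdsGT_of_mem ⟨le_refl x, hxe⟩] with y hy
    rw [slope_def_field, haff y hy.1 hy.2]
    have hne : y - x ≠ 0 := by
      have := hy.1; intro h; rw [sub_eq_zero] at h; exact absurd h (by linarith)
    field_simp
    ring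
  have h3 : Filter.Tendsto (slope g x) (𝓝[>] x) (𝓝 s) :=
    Filter.Tendsto.congr' (Filter.EventuallyEq.symm h2) tendsto_const_nhds
  exact tendsto_nhds_unique h1 h3

private lemma deriv_eq_of_left_affine {g : ℝ → ℝ} {x d s e : ℝ} (hg : HasDerivAt g d x)
    (hxe : e < x) (haff : ∀ y, e < y → y < x → g y = g x + s * (y - x)) : d = s := by
  have h1 : HasDerivWithinAt g d (Iio x) x := hg.hasDerivWithinAt
  rw [hasDerivWithinAt_iff_tendsto_slope] at h1
  have hss : Iio x \ {x} = Iio x := by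
    apply diff_singleton_eq_self
    simp
  rw [hss] at h1
  have h2 : ∀ᶠ y in 𝓝[<] x, slope g x y = s := by
    filter_upwards [Ioo_mem_nhdsLT_of_mem ⟨hxe, le_refl x⟩] with y hy
    rw [slope_def_field, haff y hy.1 hy.2]
    have : y - x ≠ 0 := by
      intro h
      have : y = x := by linarith [sub_eq_zero.1 h]
      exact absurd this (ne_of_lt hy.2)
    field_simp
    ring
  have h3 : Filter.Tendsto (slope g x) (𝓝[<] x) (𝓝 s) :=
    Filter.Tendsto.congr' (Filter.EventuallyEq.symm h2) tendsto_const_nhds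
  exact tendsto_nhds_unique h1 h3

theorem stmt3 (a b : ℝ) (hab : a < b) (F : ℝ → ℝ)
    (hF : ContinuousOn F (Set.Icc a b))
    (hFdiff : ∀ x ∈ Set.Ioo a b, DifferentiableAt ℝ F x)
    (Z : Set ℝ)
    (hZ : Z = {x ∈ Set.Icc a b | leastConcaveMajorant a b F x = F x}) :
    (∀ x ∈ Set.Ioo a b, DifferentiableAt ℝ (leastConcaveMajorant a b F) x) ∧
    (∀ x ∈ Set.Ioo a b ∩ Z, deriv (leastConcaveMajorant a b F) x = deriv F x) ∧
    (∀ (J : Set ℝ) (t : ℝ), t ∈ Set.Icc a b \ Z →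
      J = connectedComponentIn (Set.Icc a b \ Z) t →
      ∀ α β : ℝ, α < β → closure J = Set.Icc α β →
        (∀ x ∈ Set.Icc α β ∩ Set.Ioo a b,
          deriv (leastConcaveMajorant a b F) x = (F β - F α) / (β - α)) ∧
        (∀ x ∈ Set.Ioo a b, (x = α ∨ x = β) →
          deriv F x = (F β - F α) / (β - α) ∧
          deriv (leastConcaveMajorant a b F) x = (F β - F α) / (β - α))) := by

  set L := leastConcaveMajorant a b F with hLdef
  have hZmem : ∀ w, w ∈ Z ↔ (w ∈ Icc a b ∧ L w = F w) := by
    intro w; rw [hZ]; simp [Set.mem_setOf_eq]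
  have haffder : ∀ u v s x : ℝ, x ∈ Ioo u v → (∀ y ∈ Icc u v, L y = F u + s * (y - u)) →
      HasDerivAt L s x := by
    intro u v s x hx haff
    have hA : HasDerivAt (fun y => F u + s * (y - u)) s x := by
      have h2 : HasDerivAt (fun y : ℝ => y - u) 1 x := (hasDerivAt_id x).sub_const u
      have h3 := (h2.const_mul s).const_add (F u)
      simpa using h3
    apply hA.congr_of_eventuallyEq
    filter_upwards [Ioo_mem_nhds hx.1 hx.2] with y hy
    exact haff y (Ioo_subset_Icc_self hy)
  have part1 : ∀ x ∈ Set.Ioo a b, DifferentiableAt ℝ L x := by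
    intro x hx
    by_cases h : L x = F x
    · exact (lcm_hasDeriv_of_eq hab hF hx (hFdiff x hx) h).differentiableAt
    · have hgt : F x < L x :=
        lt_of_le_of_ne (le_lcm hF (Ioo_subset_Icc_self hx)) (Ne.symm h)
      obtain ⟨u, v, huI, hvI, hux, hxv, _, _, haff⟩ := lcm_affine_of_gt hF hx hgt
      exact (haffder u v _ x ⟨hux, hxv⟩ haff).differentiableAt
  refine ⟨part1, ?_, ?_⟩
  · rintro x ⟨hx, hxZ⟩
    obtain ⟨_, hLx⟩ := (hZmem x).1 hxZ
    exact (lcm_hasDeriv_of_eq hab hF hx (hFdiff x hx) hLx).deriv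
  · intro J t ht hJ α β hαβ hclo
    have htI : t ∈ Icc a b := ht.1
    have htgt : F t < L t := by
      have h1 := le_lcm hF htI
      rcases lt_or_eq_of_le h1 with h | h
      · exact h
      · exact absurd ((hZmem t).2 ⟨htI, h.symm⟩) ht.2
    have htZ : t ∉ Z := ht.2
    have htIoo : t ∈ Ioo a b := by
      rcases lt_or_eq_of_le htI.1 with h | h
      · rcases lt_or_eq_of_le htI.2 with h' | h'
        · exact ⟨h, h'⟩
        · exact absurd ((hZmem t).2 ⟨htI, h' ▸ lcm_right_endpoint hab hF⟩) htZ
      · exact absurd ((hZmem t).2 ⟨htI, h ▸ lcm_left_endpoint hab hF⟩) htZ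
    obtain ⟨u, v, huI, hvI, hut, htv, hLu, hLv, haff⟩ := lcm_affine_of_gt hF htIoo htgt
    rw [← hLdef] at hLu hLv
    have haff' : ∀ y ∈ Icc u v, L y = F u + (F v - F u) / (v - u) * (y - u) := haff
    clear haff
    have huv : u < v := lt_trans hut htv
    set s := (F v - F u) / (v - u) with hs
    have haff : ∀ y ∈ Icc u v, L y = F u + s * (y - u) := fun y hy => haff' y hy
    -- J ⊆ Ioo u v
    have hJconn : IsPreconnected J := hJ ▸ isPreconnected_connectedComponentIn
    have hJsub : J ⊆ Icc a b \ Z := hJ ▸ connectedComponentIn_subset _ _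
    have htJ : t ∈ J := hJ ▸ mem_connectedComponentIn ht
    have hJord : OrdConnected J := hJconn.ordConnected
    have hJuv : J ⊆ Ioo u v := by
      intro w hw
      constructor
      · by_contra hcon
        push_neg at hcon
        have : u ∈ J := hJord.out hw htJ ⟨hcon, hut.le⟩
        exact (hJsub this).2 ((hZmem u).2 ⟨huI, hLu⟩)
      · by_contra hcon
        push_neg at hcon
        have : v ∈ J := hJord.out htJ hw ⟨htv.le, hcon⟩
        exact (hJsub this).2 ((hZmem v).2 ⟨hvI, hLv⟩)
    have hcloJ : Icc α β ⊆ Icc u v := by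
      rw [← hclo, ← closure_Ioo huv.ne]
      exact closure_mono hJuv
    have hαuv : α ∈ Icc u v := hcloJ ⟨le_rfl, hαβ.le⟩
    have hβuv : β ∈ Icc u v := hcloJ ⟨hαβ.le, le_rfl⟩
    have hαI : α ∈ Icc a b := ⟨le_trans huI.1 hαuv.1, le_trans hαuv.2 hvI.2⟩
    have hβI : β ∈ Icc a b := ⟨le_trans huI.1 hβuv.1, le_trans hβuv.2 hvI.2⟩
    -- α and β are contact points
    have hcontact : ∀ γ ∈ Icc a b, (γ = α ∨ γ = β) → (∀ ε > 0, ∃ j ∈ J, |j - γ| < ε) →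
        L γ = F γ := by
      intro γ hγI hγαβ hγcl
      by_contra hne
      have hγgt : F γ < L γ :=
        lt_of_le_of_ne (le_lcm hF hγI) (fun h => hne h.symm)
      have hγa : γ ≠ a := fun h => hne (h ▸ lcm_left_endpoint hab hF)
      have hγb : γ ≠ b := fun h => hne (h ▸ lcm_right_endpoint hab hF)
      have hγIoo : γ ∈ Ioo a b :=
        ⟨lt_of_le_of_ne hγI.1 (Ne.symm hγa), lt_of_le_of_ne hγI.2 hγb⟩
      -- L is continuous at γ (locally affine), F continuous at γ
      obtain ⟨u₂, v₂, hu₂I, hv₂I, hu₂γ, hγv₂, _, _, haff₂⟩ := lcm_affine_of_gt hF hγIoo hγgt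
      have hLcont : ContinuousAt L γ :=
        (haffder u₂ v₂ _ γ ⟨hu₂γ, hγv₂⟩ haff₂).continuousAt
      have hFcont : ContinuousAt F γ :=
        hF.continuousAt (Icc_mem_nhds hγIoo.1 hγIoo.2)
      have hev : ∀ᶠ y in 𝓝 γ, F y < L y := by
        have : ContinuousAt (fun y => L y - F y) γ := hLcont.sub hFcont
        have h2 : ∀ᶠ y in 𝓝 γ, 0 < L y - F y :=
          this.eventually_const_lt (show (0:ℝ) < L γ - F γ by linarith)
        filter_upwards [h2] with y hy
        linarith
      have hev2 : ∀ᶠ y in 𝓝 γ, y ∈ Ioo a b := Ioo_mem_nhds hγIoo.1 hγIoo.2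
      obtain ⟨δ, hδpos, hδ⟩ := Metric.eventually_nhds_iff.1 (hev.and hev2)
      -- a whole closed interval of length δ/2 around γ avoids Z
      have hKsub : ∀ y, |y - γ| ≤ δ / 2 → y ∈ Icc a b \ Z := by
        intro y hy
        have h3 := hδ (show dist y γ < δ by rw [Real.dist_eq]; linarith [abs_nonneg (y - γ)])
        refine ⟨Ioo_subset_Icc_self h3.2, ?_⟩
        intro hyZ
        obtain ⟨_, h4⟩ := (hZmem y).1 hyZ
        linarith [h3.1, le_of_eq h4]
      -- pick j ∈ J close to γ
      obtain ⟨j, hjJ, hjγ⟩ := hγcl (min (δ / 2) ((β - α) / 4)) (lt_min (by linarith) (by linarith))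
      have hjγ' : |j - γ| ≤ δ / 2 := le_trans hjγ.le (min_le_left _ _)
      -- left escape or right escape: γ = α or γ = β matter; do both:
      -- the interval Icc (γ - δ/2) (γ + δ/2) union point j is connected in Icc a b \ Z
      have hK : Icc (γ - δ / 2) (γ + δ / 2) ⊆ Icc a b \ Z := by
        intro y hy
        apply hKsub
        rw [abs_le]
        constructor <;> [linarith [hy.1]; linarith [hy.2]]
      have hjK : j ∈ Icc (γ - δ / 2) (γ + δ / 2) := by
        rw [abs_le] at hjγ'
        constructor <;> linarith [hjγ'.1, hjγ'.2]
      have hKJ : Icc (γ - δ / 2) (γ + δ / 2) ⊆ J := by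
        have h5 : Icc (γ - δ / 2) (γ + δ / 2) ⊆ connectedComponentIn (Icc a b \ Z) j :=
          isPreconnected_Icc.subset_connectedComponentIn hjK hK
        have hjJ2 : j ∈ connectedComponentIn (Icc a b \ Z) t := by
          rw [hJ] at hjJ; exact hjJ
        have h6 : connectedComponentIn (Icc a b \ Z) j = connectedComponentIn (Icc a b \ Z) t :=
          (connectedComponentIn_eq hjJ2).symm
        rw [h6] at h5
        rw [hJ]
        exact h5
      -- but then closure J = Icc α β contains γ ± δ/2, while γ ∈ [α, β]
      have h7 : γ - δ / 2 ∈ Icc α β := by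
        rw [← hclo]
        exact subset_closure (hKJ ⟨le_rfl, by linarith⟩)
      have h8 : γ + δ / 2 ∈ Icc α β := by
        rw [← hclo]
        exact subset_closure (hKJ ⟨by linarith, le_rfl⟩)
      rcases hγαβ with h | h
      · subst h
        linarith [h7.1]
      · subst h
        linarith [h8.2]
    have hclpt : ∀ γ, γ ∈ Icc α β → ∀ ε > 0, ∃ j ∈ J, |j - γ| < ε := by
      intro γ hγ ε hε
      have h1 : γ ∈ closure J := hclo ▸ hγ
      rw [Metric.mem_closure_iff] at h1
      obtain ⟨j, hj, hd⟩ := h1 ε hε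
      exact ⟨j, hj, by rw [abs_sub_comm, ← Real.dist_eq]; exact hd⟩
    have hLα : L α = F α :=
      hcontact α hαI (Or.inl rfl) (hclpt α ⟨le_rfl, hαβ.le⟩)
    have hLβ : L β = F β :=
      hcontact β hβI (Or.inr rfl) (hclpt β ⟨hαβ.le, le_rfl⟩)
    have hβα : β - α ≠ 0 := by linarith
    have hslope : (F β - F α) / (β - α) = s := by
      have h1 : F β - F α = s * (β - α) := by
        rw [← hLα, ← hLβ, haff α hαuv, haff β hβuv]; ring
      rw [h1, mul_div_assoc, div_self hβα, mul_one]
    have hmid : ∀ x ∈ Ioo α β, deriv L x = s := by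
      intro x hx
      exact (haffder u v s x ⟨lt_of_le_of_lt hαuv.1 hx.1, lt_of_lt_of_le hx.2 hβuv.2⟩ haff).deriv
    have hαcase : α ∈ Ioo a b → deriv L α = s ∧ deriv F α = s := by
      intro hαIoo
      have hd1 : HasDerivAt L (deriv F α) α :=
        lcm_hasDeriv_of_eq hab hF hαIoo (hFdiff α hαIoo) hLα
      have haffα : ∀ y, α < y → y < β → L y = L α + s * (y - α) := by
        intro y hy1 hy2
        rw [haff y ⟨le_trans hαuv.1 hy1.le, le_trans hy2.le hβuv.2⟩, haff α hαuv]; ring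
      have h2 : deriv F α = s := deriv_eq_of_right_affine hd1 hαβ haffα
      exact ⟨by rw [hd1.deriv]; exact h2, h2⟩
    have hβcase : β ∈ Ioo a b → deriv L β = s ∧ deriv F β = s := by
      intro hβIoo
      have hd1 : HasDerivAt L (deriv F β) β :=
        lcm_hasDeriv_of_eq hab hF hβIoo (hFdiff β hβIoo) hLβ
      have haffβ : ∀ y, α < y → y < β → L y = L β + s * (y - β) := by
        intro y hy1 hy2
        rw [haff y ⟨le_trans hαuv.1 hy1.le, le_trans hy2.le hβuv.2⟩, haff β hβuv]; ring
      have h2 : deriv F β = s := deriv_eq_of_left_affine hd1 hαβ haffβ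
      exact ⟨by rw [hd1.deriv]; exact h2, h2⟩
    constructor
    · rintro x ⟨hxαβ, hxIoo⟩
      rw [hslope]
      rcases eq_or_lt_of_le hxαβ.1 with h | h
      · exact h ▸ (hαcase (h ▸ hxIoo)).1
      · rcases eq_or_lt_of_le hxαβ.2 with h' | h'
        · exact h' ▸ (hβcase (h' ▸ hxIoo)).1
        · exact hmid x ⟨h, h'⟩
    · intro x hxIoo hxor
      rw [hslope]
      rcases hxor with rfl | rfl
      · exact ⟨(hαcase hxIoo).2, (hαcase hxIoo).1⟩
      · exact ⟨(hβcase hxIoo).2, (hβcase hxIoo).1⟩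

end Aux
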